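/- Let $\theta \in \mathbb{R}$ and suppose the equation $x = \int_{\mathbb{X}} e^{\theta + H(a)(x-1)} q(da)$ has a minimal solution $x_* \geq 1$. Suppose $F : [0,\infty) \to [1, x_*]$ is nondecreasing and satisfies the functional equation $F(t) = \int_{\mathbb{X}} \exp\left(\theta + \int_0^t h(s,a)(F(t-s) - 1)\, ds\right) q(da)$ for all $t \geq 0$. Then $F(t) \to x_*$ as $t \to \infty$. -/

import Mathlib

open MeasureTheory Filter Set

/-- if `x_*` is the minimal solution `≥ 1` of
`x = ∫ e^{θ + H(a)(x-1)} dq` and `F : [0,∞) → [1, x_*]` is nondecreasing and satisfies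
the branching functional equation
`F(t) = ∫ exp(θ + ∫_0^t h(s,a)(F(t-s)-1) ds) dq`, then `F(t) → x_*` as `t → ∞`. -/
theorem stmt_10 {X : Type*} [MeasurableSpace X] (q : Measure X) [IsProbabilityMeasure q]
    (h : ℝ → X → ℝ) (hmeas : Measurable (Function.uncurry h))
    (hnonneg : ∀ t a, 0 ≤ h t a)
    (hint : Integrable (Function.uncurry h) ((volume.restrict (Ioi (0 : ℝ))).prod q))
    (θ : ℝ) (xs : ℝ)
    (hxs : IsLeast {x : ℝ | 1 ≤ x ∧
      x = ∫ a, Real.exp (θ + (∫ t in Ioi (0 : ℝ), h t a) * (x - 1)) ∂q} xs)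
    (F : ℝ → ℝ) (hFmono : MonotoneOn F (Ici 0))
    (hFbound : ∀ t ≥ (0 : ℝ), 1 ≤ F t ∧ F t ≤ xs)
    (hFeq : ∀ t ≥ (0 : ℝ),
      F t = ∫ a, Real.exp (θ + ∫ s in (0 : ℝ)..t, h s a * (F (t - s) - 1)) ∂q) :
    Tendsto F atTop (nhds xs) := by
  classical
  set H : X → ℝ := fun a => ∫ t in Ioi (0 : ℝ), h t a with hH
  have hxs1 : (1 : ℝ) ≤ xs := hxs.1.1
  -- extend F monotonically to all of ℝ
  set F' : ℝ → ℝ := fun t => F (max t 0) with hF'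
  have hF'mono : Monotone F' := fun s t hst =>
    hFmono (le_max_right s 0) (le_max_right t 0) (max_le_max hst le_rfl)
  have hF'meas : Measurable F' := hF'mono.measurable
  have hF'bd : ∀ t, 1 ≤ F' t ∧ F' t ≤ xs := fun t => hFbound _ (le_max_right t 0)
  have hbdd : BddAbove (Set.range F') := ⟨xs, by rintro x ⟨t, rfl⟩; exact (hF'bd t).2⟩
  set L : ℝ := ⨆ t, F' t with hL
  have hFL' : Tendsto F' atTop (nhds L) := tendsto_atTop_ciSup hF'mono hbdd
  have hLle : L ≤ xs := ciSup_le fun t => (hF'bd t).2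
  have h1L : (1 : ℝ) ≤ L := le_trans (hF'bd 0).1 (le_ciSup hbdd 0)
  have hFF' : ∀ᶠ t in atTop, F t = F' t := by
    filter_upwards [eventually_ge_atTop (0 : ℝ)] with t ht
    simp [hF', max_eq_left ht]
  have hFL : Tendsto F atTop (nhds L) := hFL'.congr' (hFF'.mono fun _ e => e.symm)
  -- a.e. integrability of slices
  have hslice : ∀ᵐ a ∂q, Integrable (fun t => h t a) (volume.restrict (Ioi (0 : ℝ))) :=
    hint.prod_left_ae
  -- integrability of the dominating bound
  have hBint : Integrable (fun a => Real.exp (θ + H a * (xs - 1))) q := by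
    by_contra hni
    have := hxs.1.2
    rw [integral_undef hni] at this
    linarith
  -- the indicator form of the inner integral
  set G : ℝ → X → ℝ → ℝ := fun t a s =>
    (Ioc (0 : ℝ) t).indicator (fun u => h u a * (F' (t - u) - 1)) s with hG
  have hGnonneg : ∀ t a s, 0 ≤ G t a s := by
    intro t a s
    by_cases hs : s ∈ Ioc (0 : ℝ) t
    · simp only [hG, indicator_of_mem hs]
      exact mul_nonneg (hnonneg _ _) (by linarith [(hF'bd (t - s)).1])
    · simp [hG, indicator_of_notMem hs]
  have hGle : ∀ t a s, G t a s ≤ h s a * (xs - 1) := by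
    intro t a s
    by_cases hs : s ∈ Ioc (0 : ℝ) t
    · simp only [hG, indicator_of_mem hs]
      exact mul_le_mul_of_nonneg_left (by linarith [(hF'bd (t - s)).2]) (hnonneg _ _)
    · simp only [hG, indicator_of_notMem hs]
      exact mul_nonneg (hnonneg _ _) (by linarith)
  have hrw : ∀ t ≥ (0 : ℝ), ∀ a,
      (∫ s in (0 : ℝ)..t, h s a * (F (t - s) - 1)) = ∫ s in Ioi (0 : ℝ), G t a s := by
    intro t ht a
    rw [intervalIntegral.integral_of_le ht, hG]
    rw [integral_indicator measurableSet_Ioc, Measure.restrict_restrict measurableSet_Ioc,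
      Set.Ioc_inter_Ioi, max_self]
    refine setIntegral_congr_fun measurableSet_Ioc fun s hs => ?_
    have : max (t - s) 0 = t - s := max_eq_left (by linarith [hs.2])
    simp [hF', this]
  -- joint measurability / measurability in a of the inner integral
  have hGmeas : ∀ t, Measurable (fun p : X × ℝ => G t p.1 p.2) := by
    intro t
    have : (fun p : X × ℝ => G t p.1 p.2) =
        Set.indicator ((univ : Set X) ×ˢ Ioc (0 : ℝ) t)
          (fun p : X × ℝ => h p.2 p.1 * (F' (t - p.2) - 1)) := by
      ext p
      by_cases hp : p.2 ∈ Ioc (0 : ℝ) t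
      · simp only [hG]
        rw [Set.indicator_of_mem hp, Set.indicator_of_mem (Set.mem_prod.2 ⟨mem_univ _, hp⟩)]
      · simp only [hG]
        rw [Set.indicator_of_notMem hp,
          Set.indicator_of_notMem (fun hc => hp (Set.mem_prod.1 hc).2)]
    rw [this]
    exact ((hmeas.comp measurable_swap).mul
      ((hF'meas.comp (measurable_const.sub measurable_snd)).sub measurable_const)).indicator
      (MeasurableSet.univ.prod measurableSet_Ioc)
  have hinnermeas : ∀ t, Measurable fun a => ∫ s in Ioi (0 : ℝ), G t a s := by
    intro t
    exact ((hGmeas t).stronglyMeasurable.integral_prod_right').measurable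
  -- pointwise (in a) convergence of the inner integral
  have hinnertend : ∀ᵐ a ∂q,
      Tendsto (fun t => ∫ s in Ioi (0 : ℝ), G t a s) atTop (nhds (H a * (L - 1))) := by
    filter_upwards [hslice] with a hInt
    have key : Tendsto (fun t => ∫ s in Ioi (0 : ℝ), G t a s) atTop
        (nhds (∫ s in Ioi (0 : ℝ), h s a * (L - 1))) := by
      apply tendsto_integral_filter_of_dominated_convergence (fun s => h s a * (xs - 1))
      · refine Eventually.of_forall fun t => ?_
        exact ((hGmeas t).comp (measurable_prodMk_left)).aestronglyMeasurable
      · refine Eventually.of_forall fun t => Eventually.of_forall fun s => ?_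
        rw [Real.norm_eq_abs, abs_of_nonneg (hGnonneg t a s)]
        exact hGle t a s
      · exact hInt.mul_const _
      · filter_upwards [ae_restrict_mem measurableSet_Ioi] with s hs
        have h1 : Tendsto (fun t : ℝ => t - s) atTop atTop :=
          tendsto_atTop_add_const_right atTop (-s) tendsto_id
        have h2 : Tendsto (fun t => h s a * (F' (t - s) - 1)) atTop
            (nhds (h s a * (L - 1))) := (((hFL'.comp h1).sub_const 1).const_mul _)
        refine h2.congr' ?_
        filter_upwards [eventually_ge_atTop s] with t hts
        have : s ∈ Ioc (0 : ℝ) t := ⟨hs, hts⟩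
        simp [hG, indicator_of_mem this]
    have : (∫ s in Ioi (0 : ℝ), h s a * (L - 1)) = H a * (L - 1) := by
      rw [hH, ← integral_mul_const]
    rwa [this] at key
  -- dominated convergence for the outer integral
  have hΦtend : Tendsto (fun t => ∫ a, Real.exp (θ + ∫ s in Ioi (0 : ℝ), G t a s) ∂q)
      atTop (nhds (∫ a, Real.exp (θ + H a * (L - 1)) ∂q)) := by
    apply tendsto_integral_filter_of_dominated_convergence
      (fun a => Real.exp (θ + H a * (xs - 1)))
    · refine Eventually.of_forall fun t => ?_
      exact (Real.measurable_exp.comp (measurable_const.add (hinnermeas t))).aestronglyMeasurable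
    · refine Eventually.of_forall fun t => ?_
      filter_upwards [hslice] with a hInt
      rw [Real.norm_eq_abs, abs_of_nonneg (Real.exp_nonneg _)]
      apply Real.exp_le_exp.2
      apply add_le_add_right
      have : (∫ s in Ioi (0 : ℝ), G t a s) ≤ ∫ s in Ioi (0 : ℝ), h s a * (xs - 1) := by
        apply integral_mono_of_nonneg (Eventually.of_forall (hGnonneg t a))
          (hInt.mul_const _) (Eventually.of_forall (hGle t a))
      rwa [integral_mul_const] at this
    · exact hBint
    · filter_upwards [hinnertend] with a ha
      exact (Real.continuous_exp.continuousAt.tendsto.comp (tendsto_const_nhds.add ha))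
  -- F eventually equals the outer integral
  have hFeqΦ : ∀ᶠ t in atTop, F t = ∫ a, Real.exp (θ + ∫ s in Ioi (0 : ℝ), G t a s) ∂q := by
    filter_upwards [eventually_ge_atTop (0 : ℝ)] with t ht
    rw [hFeq t ht]
    congr 1
    ext a
    rw [hrw t ht a]
  have hFtend2 : Tendsto F atTop (nhds (∫ a, Real.exp (θ + H a * (L - 1)) ∂q)) :=
    hΦtend.congr' (hFeqΦ.mono fun _ e => e.symm)
  have hLeq : L = ∫ a, Real.exp (θ + H a * (L - 1)) ∂q := tendsto_nhds_unique hFL hFtend2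
  have hxsL : xs ≤ L := hxs.2 ⟨h1L, hLeq⟩
  have : L = xs := le_antisymm hLle hxsL
  rwa [this] at hFL
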